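/- Let G be a finite abelian group, A ⊆ G a symmetric set containing 0, and h : G → ℝ a function such that h(x) ≤ 0 for all x ∉ A, and all Fourier coefficients ĥ(γ) = (1/|G|)∑_{x∈G} h(x)γ(x) are nonnegative, with ĥ(1) > 0 (where 1 is the trivial character). Then for any set B ⊆ G with the property that b - b' ∈ (G\A) ∪ {0} for all b, b' ∈ B, one has |B| ≤ h(0)/ĥ(1). -/

import Mathlib

open Finset

private lemma delsarte_key {G : Type*} [AddCommGroup G] [Fintype G] [DecidableEq G]
    (A : Finset G)
    (h : G → ℝ)
    (hneg : ∀ x : G, x ∉ A → h x ≤ 0)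
    (hft : ∀ γ : AddChar G ℂ,
      0 ≤ ((∑ x : G, (h x : ℂ) * γ x) / (Fintype.card G : ℂ)).re ∧
      ((∑ x : G, (h x : ℂ) * γ x) / (Fintype.card G : ℂ)).im = 0)
    (B : Finset G)
    (hB : ∀ b ∈ B, ∀ b' ∈ B, b - b' ∉ A ∨ b - b' = 0) :
    ((∑ x : G, (h x : ℂ) * (1 : AddChar G ℂ) x) / (Fintype.card G : ℂ)).re * (B.card : ℝ) ^ 2
      ≤ (B.card : ℝ) * h 0 := by
  set n : ℂ := (Fintype.card G : ℂ) with hn_def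
  have hn : n ≠ 0 := Nat.cast_ne_zero.mpr Fintype.card_ne_zero
  set z : AddChar G ℂ → ℂ := fun γ => ∑ b ∈ B, γ b with hz
  -- pointwise expansion
  have step1 : ∀ γ : AddChar G ℂ,
      (∑ x : G, (h x : ℂ) * γ x) * (z γ * (starRingEnd ℂ) (z γ))
        = ∑ b ∈ B, ∑ b' ∈ B, ∑ x : G, (h x : ℂ) * γ (x + (b - b')) := by
    intro γ
    have hconj : (starRingEnd ℂ) (z γ) = ∑ b' ∈ B, γ (-b') := by
      rw [hz, map_sum]
      exact Finset.sum_congr rfl fun b' _ => (AddChar.map_neg_eq_conj γ b').symm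
    rw [hconj, hz]
    rw [Finset.sum_mul_sum]
    rw [Finset.mul_sum]
    refine Finset.sum_congr rfl fun b _ => ?_
    rw [Finset.mul_sum]
    refine Finset.sum_congr rfl fun b' _ => ?_
    rw [Finset.sum_mul]
    refine Finset.sum_congr rfl fun x _ => ?_
    rw [mul_assoc, ← AddChar.map_add_eq_mul, ← AddChar.map_add_eq_mul, sub_eq_add_neg]
  -- collapse inner sum over characters
  have collapse : ∀ c : G, ∑ γ : AddChar G ℂ, ∑ x : G, (h x : ℂ) * γ (x + c)
      = (h (-c) : ℂ) * n := by
    intro c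
    rw [Finset.sum_comm]
    have : ∀ x : G, ∑ γ : AddChar G ℂ, (h x : ℂ) * γ (x + c)
        = if x = -c then (h x : ℂ) * n else 0 := by
      intro x
      rw [← Finset.mul_sum, AddChar.sum_apply_eq_ite]
      simp only [mul_ite, mul_zero, add_eq_zero_iff_eq_neg]
      rfl
    rw [Finset.sum_congr rfl fun x _ => this x, Finset.sum_ite_eq' Finset.univ (-c)]
    simp
  have Hc : ∑ γ : AddChar G ℂ, ((∑ x : G, (h x : ℂ) * γ x) / n) * (z γ * (starRingEnd ℂ) (z γ))
      = ∑ b ∈ B, ∑ b' ∈ B, (h (b' - b) : ℂ) := by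
    have : ∑ γ : AddChar G ℂ, (∑ x : G, (h x : ℂ) * γ x) * (z γ * (starRingEnd ℂ) (z γ))
        = ∑ b ∈ B, ∑ b' ∈ B, (h (b' - b) : ℂ) * n := by
      rw [Finset.sum_congr rfl fun γ _ => step1 γ, Finset.sum_comm]
      refine Finset.sum_congr rfl fun b _ => ?_
      rw [Finset.sum_comm]
      refine Finset.sum_congr rfl fun b' _ => ?_
      rw [collapse (b - b'), neg_sub]
    calc ∑ γ : AddChar G ℂ, ((∑ x : G, (h x : ℂ) * γ x) / n) * (z γ * (starRingEnd ℂ) (z γ))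
        = (∑ γ : AddChar G ℂ, (∑ x : G, (h x : ℂ) * γ x) * (z γ * (starRingEnd ℂ) (z γ))) / n := by
          rw [Finset.sum_div]
          exact Finset.sum_congr rfl fun γ _ => (div_mul_eq_mul_div _ _ _)
      _ = (∑ b ∈ B, ∑ b' ∈ B, (h (b' - b) : ℂ) * n) / n := by rw [this]
      _ = ∑ b ∈ B, ∑ b' ∈ B, (h (b' - b) : ℂ) := by
          rw [Finset.sum_div]
          refine Finset.sum_congr rfl fun b _ => ?_
          rw [Finset.sum_div]
          exact Finset.sum_congr rfl fun b' _ => mul_div_cancel_right₀ _ hn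
  -- take real parts
  set S : ℝ := ∑ b ∈ B, ∑ b' ∈ B, h (b' - b) with hS
  have Hre : ∑ γ : AddChar G ℂ, ((∑ x : G, (h x : ℂ) * γ x) / n).re * Complex.normSq (z γ) = S := by
    calc ∑ γ : AddChar G ℂ, ((∑ x : G, (h x : ℂ) * γ x) / n).re * Complex.normSq (z γ)
        = ∑ γ : AddChar G ℂ, (((∑ x : G, (h x : ℂ) * γ x) / n) * (z γ * (starRingEnd ℂ) (z γ))).re := by
          refine Finset.sum_congr rfl fun γ _ => ?_
          rw [Complex.mul_conj, Complex.mul_re, Complex.ofReal_im, mul_zero, sub_zero,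
            Complex.ofReal_re]
      _ = (∑ b ∈ B, ∑ b' ∈ B, (h (b' - b) : ℂ)).re := by rw [← Hc, Complex.re_sum]
      _ = S := by simp [Complex.re_sum, hS]
  -- it remains: lower bound and upper bound on S
  have lower : ((∑ x : G, (h x : ℂ) * (1 : AddChar G ℂ) x) / n).re * (B.card : ℝ) ^ 2 ≤ S := by
    rw [← Hre]
    have h1 : z (1 : AddChar G ℂ) = (B.card : ℂ) := by
      simp [hz]
    have h2 : Complex.normSq (z 1) = (B.card : ℝ) ^ 2 := by
      rw [h1, Complex.normSq_natCast]; push_cast; ring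
    rw [← h2]
    exact Finset.single_le_sum
      (fun γ _ => mul_nonneg (hft γ).1 (Complex.normSq_nonneg _)) (Finset.mem_univ 1)
  have upper : S ≤ (B.card : ℝ) * h 0 := by
    rw [hS]
    calc ∑ b ∈ B, ∑ b' ∈ B, h (b' - b) ≤ ∑ b ∈ B, h 0 := by
          refine Finset.sum_le_sum fun b hb => ?_
          rw [← Finset.sum_erase_add B _ hb, sub_self]
          have : ∑ b' ∈ B.erase b, h (b' - b) ≤ 0 := by
            refine Finset.sum_nonpos fun b' hb' => ?_
            obtain ⟨hne, hb'B⟩ := Finset.mem_erase.mp hb'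
            rcases hB b' hb'B b hb with hcase | hcase
            · exact hneg _ hcase
            · exact absurd (sub_eq_zero.mp hcase) hne
          linarith
      _ = (B.card : ℝ) * h 0 := by rw [Finset.sum_const, nsmul_eq_mul]
  linarith

/-- Delsarte's LP bound on a finite abelian group. -/
theorem delsarte_bound {G : Type*} [AddCommGroup G] [Fintype G] [DecidableEq G]
    (A : Finset G) (hA0 : (0 : G) ∈ A) (hAsymm : ∀ x ∈ A, -x ∈ A)
    (h : G → ℝ)
    (hneg : ∀ x : G, x ∉ A → h x ≤ 0)
    (hft : ∀ γ : AddChar G ℂ,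
      0 ≤ ((∑ x : G, (h x : ℂ) * γ x) / (Fintype.card G : ℂ)).re ∧
      ((∑ x : G, (h x : ℂ) * γ x) / (Fintype.card G : ℂ)).im = 0)
    (hpos : 0 < ((∑ x : G, (h x : ℂ) * (1 : AddChar G ℂ) x) / (Fintype.card G : ℂ)).re)
    (B : Finset G)
    (hB : ∀ b ∈ B, ∀ b' ∈ B, b - b' ∉ A ∨ b - b' = 0) :
    (B.card : ℝ) ≤
      h 0 / ((∑ x : G, (h x : ℂ) * (1 : AddChar G ℂ) x) / (Fintype.card G : ℂ)).re := by
  set c1 : ℝ := ((∑ x : G, (h x : ℂ) * (1 : AddChar G ℂ) x) / (Fintype.card G : ℂ)).re with hc1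
  have key := delsarte_key A h hneg hft B hB
  have key0 := delsarte_key A h hneg hft {0} (by
    intro b hb b' hb'
    simp only [Finset.mem_singleton] at hb hb'
    subst hb; subst hb'
    exact Or.inr (sub_self 0))
  simp only [Finset.card_singleton, Nat.cast_one, one_pow, mul_one, one_mul] at key0
  -- key0 : c1 ≤ h 0
  rcases Nat.eq_zero_or_pos B.card with hcard | hcard
  · rw [hcard]
    push_cast
    exact div_nonneg (le_trans hpos.le key0) hpos.le
  · have hc : (0 : ℝ) < (B.card : ℝ) := Nat.cast_pos.mpr hcard
    rw [le_div_iff₀ hpos]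
    have : (c1 * (B.card : ℝ)) * (B.card : ℝ) ≤ h 0 * (B.card : ℝ) := by
      calc (c1 * (B.card : ℝ)) * (B.card : ℝ) = c1 * (B.card : ℝ) ^ 2 := by ring
        _ ≤ (B.card : ℝ) * h 0 := key
        _ = h 0 * (B.card : ℝ) := by ring
    have := le_of_mul_le_mul_right this hc
    linarith
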